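/- If X is a compact Hausdorff LOTS and μ is a regular (complex or finite positive) Borel measure on X, then the closed support of μ is separable. -/

import Mathlib

open MeasureTheory Set
open scoped ENNReal NNReal

section Aux

variable {X : Type*} [LinearOrder X] [TopologicalSpace X] [OrderTopology X]
    [CompactSpace X] [MeasurableSpace X] [BorelSpace X]

/-- Key dichotomy: on a nonempty compact LOTS with a finite regular measure, if
`0 < p < q ≤ μ univ`, then there must exist a point `y` with `p < μ (Iic y)` and
`μ (Iio y) < q`. -/
lemma key18 (μ : Measure X) [IsFiniteMeasure μ] [μ.Regular] [Nonempty X]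
    {p q : ℝ≥0∞} (hp : 0 < p) (hpq : p < q) (hq : q ≤ μ univ)
    (h : ∀ y : X, μ (Iic y) ≤ p ∨ q ≤ μ (Iio y)) : False := by
  classical
  set A : Set X := {y : X | μ (Iic y) ≤ p} with hA
  set B : Set X := {y : X | q ≤ μ (Iio y)} with hB
  have hfin : ∀ s : Set X, μ s ≠ ⊤ := fun s => measure_ne_top μ s
  have hdisj : ∀ y : X, y ∈ A → y ∈ B → False := by
    intro y hyA hyB
    exact absurd ((hyB.trans (measure_mono Iio_subset_Iic_self)).trans hyA) (not_le.2 hpq)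
  -- A is nonempty
  obtain ⟨x₀, -, hx₀⟩ := isCompact_univ.exists_isLeast (univ_nonempty (α := X))
  have hx₀A : x₀ ∈ A := by
    rcases h x₀ with h' | h'
    · exact h'
    · exfalso
      have : Iio x₀ = (∅ : Set X) := by
        ext y; simp only [mem_Iio, mem_empty_iff_false, iff_false, not_lt]
        exact hx₀ (mem_univ y)
      rw [this, measure_empty] at h'
      exact absurd (h'.trans_lt' (hp.trans hpq)) (lt_irrefl 0)
  -- B is nonempty
  obtain ⟨x₁, -, hx₁⟩ := isCompact_univ.exists_isGreatest (univ_nonempty (α := X))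
  have hx₁B : x₁ ∈ B := by
    rcases h x₁ with h' | h'
    · exfalso
      have : Iic x₁ = (univ : Set X) := by
        ext y; simp only [mem_Iic, mem_univ, iff_true]
        exact hx₁ (mem_univ y)
      rw [this] at h'
      exact absurd (hq.trans h') (not_le.2 hpq)
    · exact h'
  -- the greatest element of the closure of A
  obtain ⟨a, hac, hamax⟩ :=
    (isClosed_closure (s := A)).isCompact.exists_isGreatest ⟨x₀, subset_closure hx₀A⟩
  have hAle : ∀ y ∈ A, y ≤ a := fun y hy => hamax (subset_closure hy)
  by_cases haA : a ∈ A
  · -- `a` is the greatest element of `A`, so `A = Iic a`, `B = Ioi a`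
    have hAeq : A = Iic a := by
      apply Subset.antisymm (fun y hy => hAle y hy)
      intro y (hy : y ≤ a)
      exact le_trans (measure_mono (Iic_subset_Iic.2 hy)) haA
    have hBeq : B = Ioi a := by
      ext y
      constructor
      · intro hyB
        by_contra hlt
        have : y ∈ A := by rw [hAeq]; exact not_lt.1 hlt
        exact hdisj y this hyB
      · intro (hy : a < y)
        rcases h y with h' | h'
        · exact absurd (hAle y h') (not_le.2 hy)
        · exact h'
    by_cases hleast : ∃ b, IsLeast B b
    · obtain ⟨b, hbB, hbmin⟩ := hleast
      have hab : a < b := by have h' := hbB; rw [hBeq] at h'; exact h'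
      have : Iio b = Iic a := by
        ext y
        constructor
        · intro (hy : y < b)
          by_contra hya
          have hyB : y ∈ B := hBeq ▸ (not_le.1 hya : a < y)
          exact absurd (hbmin hyB) (not_le.2 hy)
        · intro (hy : y ≤ a)
          exact lt_of_le_of_lt hy hab
      have h1 : q ≤ μ (Iic a) := by
        have h' : q ≤ μ (Iio b) := hbB
        rwa [this] at h'
      exact absurd ((h1.trans haA).trans_lt hpq) (lt_irrefl q)
    · -- B has no least element
      push_neg at hleast
      have hno : ∀ b ∈ B, ∃ b' ∈ B, b' < b := by
        intro b hb
        rcases not_forall.1 (fun hc => hleast b ⟨hb, hc⟩) with ⟨b', hb'⟩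
        rcases _root_.not_imp.1 hb' with ⟨hb'B, hnle⟩
        exact ⟨b', hb'B, not_le.1 hnle⟩
      have hUq : q ≤ μ (Ioi a) + p := by
        calc q ≤ μ univ := hq
        _ = μ (Iic a ∪ Ioi a) := by rw [Iic_union_Ioi]
        _ ≤ μ (Iic a) + μ (Ioi a) := measure_union_le _ _
        _ ≤ p + μ (Ioi a) := add_le_add_left haA _
        _ = μ (Ioi a) + p := add_comm _ _
      have hεpos : q - p ≠ 0 := by
        simpa [pos_iff_ne_zero] using (tsub_pos_of_lt hpq)
      obtain ⟨K, hKU, hKcomp, hKlt⟩ :=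
        (Measure.Regular.innerRegular (μ := μ)).exists_subset_lt_add isCompact_empty
          (isOpen_Ioi (a := a)) (hfin _) hεpos
      have hKne : K.Nonempty := by
        rcases eq_empty_or_nonempty K with rfl | hne
        · rw [measure_empty, zero_add] at hKlt
          exact absurd (hKlt.trans_le (tsub_le_iff_right.2 hUq)) (lt_irrefl _)
        · exact hne
      obtain ⟨k, hkK, hkmin⟩ := hKcomp.exists_isLeast hKne
      have hkB : k ∈ B := by rw [hBeq]; exact hKU hkK
      obtain ⟨b', hb'B, hb'k⟩ := hno k hkB
      have hIoo : q - p ≤ μ (Ioo a b') := by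
        rw [tsub_le_iff_right]
        calc q ≤ μ (Iio b') := hb'B
        _ ≤ μ (Iic a ∪ Ioo a b') := by
              apply measure_mono
              intro y (hy : y < b')
              rcases le_or_gt y a with h' | h'
              · exact Or.inl h'
              · exact Or.inr ⟨h', hy⟩
        _ ≤ μ (Iic a) + μ (Ioo a b') := measure_union_le _ _
        _ ≤ p + μ (Ioo a b') := add_le_add_left haA _
        _ = μ (Ioo a b') + p := add_comm _ _
      have hdisjKI : Disjoint (Ioo a b') K := by
        rw [disjoint_left]
        intro y hy hyK
        exact absurd (hkmin hyK) (not_le.2 (hy.2.trans hb'k))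
      have hKmeas : MeasurableSet K := hKcomp.isClosed.measurableSet
      have hsub : Ioo a b' ∪ K ⊆ Ioi a := by
        intro y hy
        rcases hy with hy | hy
        · exact hy.1
        · exact hKU hy
      have : μ (Ioi a) < μ (Ioi a) := by
        calc μ (Ioi a) < μ K + (q - p) := hKlt
        _ ≤ μ K + μ (Ioo a b') := add_le_add_right hIoo _
        _ = μ (Ioo a b' ∪ K) := by rw [measure_union hdisjKI hKmeas, add_comm]
        _ ≤ μ (Ioi a) := measure_mono hsub
      exact absurd this (lt_irrefl _)
  · -- `a ∉ A`, so `a ∈ B`, `A = Iio a`, and `A` has no greatest element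
    have haB : a ∈ B := (h a).resolve_left haA
    have hBsub : B ⊆ Ici a := by
      intro y hyB
      by_contra hya
      have hya : y < a := not_le.1 hya
      have hAsub : A ⊆ Iio y := by
        intro z hz
        by_contra hzy
        have : z ∈ B := hB ▸ (hyB.trans (measure_mono (Iio_subset_Iio (not_lt.1 hzy))))
        exact hdisj z hz this
      have : closure A ⊆ Iic y :=
        closure_minimal (hAsub.trans Iio_subset_Iic_self) isClosed_Iic
      exact absurd (this hac) (not_le.2 hya)
    have hAeq : A = Iio a := by
      apply Subset.antisymm
      · intro y hy
        exact lt_of_le_of_ne (hAle y hy) (fun hcon => haA (hcon ▸ hy))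
      · intro y (hy : y < a)
        rcases h y with h' | h'
        · exact h'
        · exact absurd (hBsub h') (not_le.2 hy)
    have hnog : ∀ k ∈ A, ∃ a' ∈ A, k < a' := by
      intro k hk
      by_contra hcon
      push_neg at hcon
      have hGreat : IsGreatest A k := ⟨hk, fun y hy => not_lt.1 (fun hlt => absurd hlt (not_lt.2 (le_of_not_gt (fun h2 => absurd hy (fun hyA => absurd h2 (not_lt.2 (hcon y hyA)))))))⟩
      have : A = Iic k := by
        apply Subset.antisymm (fun y hy => hGreat.2 hy)
        intro y (hy : y ≤ k)
        exact le_trans (measure_mono (Iic_subset_Iic.2 hy)) hk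
      rw [this] at hac
      rw [isClosed_Iic.closure_eq] at hac
      exact haA (this ▸ (hac : a ∈ Iic k))
    have hUq : q ≤ μ (Iio a) := haB
    have hεpos : q - p ≠ 0 := by
      simpa [pos_iff_ne_zero] using (tsub_pos_of_lt hpq)
    obtain ⟨K, hKU, hKcomp, hKlt⟩ :=
      (Measure.Regular.innerRegular (μ := μ)).exists_subset_lt_add isCompact_empty
        (isOpen_Iio (a := a)) (hfin _) hεpos
    have hKne : K.Nonempty := by
      rcases eq_empty_or_nonempty K with rfl | hne
      · rw [measure_empty, zero_add] at hKlt
        exact absurd (hKlt.trans_le ((tsub_le_self).trans hUq)) (lt_irrefl _)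
      · exact hne
    obtain ⟨k, hkK, hkmax⟩ := hKcomp.exists_isGreatest hKne
    have hkA : k ∈ A := by rw [hAeq]; exact hKU hkK
    obtain ⟨a', ha'A, hka'⟩ := hnog k hkA
    have hIoo : q - p ≤ μ (Ioo a' a) := by
      rw [tsub_le_iff_right]
      calc q ≤ μ (Iio a) := hUq
      _ ≤ μ (Iic a' ∪ Ioo a' a) := by
            apply measure_mono
            intro y (hy : y < a)
            rcases le_or_gt y a' with h' | h'
            · exact Or.inl h'
            · exact Or.inr ⟨h', hy⟩
      _ ≤ μ (Iic a') + μ (Ioo a' a) := measure_union_le _ _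
      _ ≤ p + μ (Ioo a' a) := add_le_add_left ha'A _
      _ = μ (Ioo a' a) + p := add_comm _ _
    have hdisjKI : Disjoint (Ioo a' a) K := by
      rw [disjoint_left]
      intro y hy hyK
      exact absurd ((hkmax hyK).trans_lt hka') (not_lt.2 hy.1.le)
    have hKmeas : MeasurableSet K := hKcomp.isClosed.measurableSet
    have hsub : Ioo a' a ∪ K ⊆ Iio a := by
      intro y hy
      rcases hy with hy | hy
      · exact hy.2
      · exact hKU hy
    have : μ (Iio a) < μ (Iio a) := by
      calc μ (Iio a) < μ K + (q - p) := hKlt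
      _ ≤ μ K + μ (Ioo a' a) := add_le_add_right hIoo _
      _ = μ (Ioo a' a ∪ K) := by rw [measure_union hdisjKI hKmeas, add_comm]
      _ ≤ μ (Iio a) := measure_mono hsub
    exact absurd this (lt_irrefl _)

end Aux

/-- If `X` is a compact Hausdorff LOTS and `μ` a finite positive regular Borel measure
on `X`, then the closed support of `μ` (the complement of the union of the open
`μ`-null sets, i.e. the smallest closed set whose complement is `μ`-null) is separable. -/
theorem stmt18 {X : Type*} [LinearOrder X] [TopologicalSpace X] [OrderTopology X]
    [CompactSpace X] [MeasurableSpace X] [BorelSpace X]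
    (μ : Measure X) [IsFiniteMeasure μ] [μ.Regular] :
    TopologicalSpace.IsSeparable
      ((⋃₀ {U : Set X | IsOpen U ∧ μ U = 0})ᶜ) := by
  classical
  -- the countable selection sets
  have sel : ∀ p q : ℚ, ∃ s : Set X, s.Countable ∧
      ((∃ y : X, (Real.toNNReal p : ℝ≥0∞) < μ (Iic y) ∧ μ (Iio y) < (Real.toNNReal q : ℝ≥0∞)) →
        ∃ d ∈ s, (Real.toNNReal p : ℝ≥0∞) < μ (Iic d) ∧ μ (Iio d) < (Real.toNNReal q : ℝ≥0∞)) := by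
    intro p q
    by_cases h : ∃ y : X, (Real.toNNReal p : ℝ≥0∞) < μ (Iic y) ∧ μ (Iio y) < (Real.toNNReal q : ℝ≥0∞)
    · exact ⟨{h.choose}, countable_singleton _, fun _ => ⟨h.choose, rfl, h.choose_spec⟩⟩
    · exact ⟨∅, countable_empty, fun h' => absurd h' h⟩
  choose s hs1 hs2 using sel
  refine ⟨⋃ p : ℚ, ⋃ q : ℚ, s p q,
    countable_iUnion (fun p => countable_iUnion fun q => hs1 p q), ?_⟩
  intro x hx
  have hxpos : ∀ V : Set X, IsOpen V → x ∈ V → μ V ≠ 0 := by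
    intro V hV hxV h0
    exact hx ⟨V, ⟨hV, h0⟩, hxV⟩
  rw [mem_closure_iff]
  intro U hUo hxU
  have hU : U ∈ nhds x := hUo.mem_nhds hxU
  -- extract an "interval" neighborhood with the required properties
  obtain ⟨I, lo, hi, hIU, hIopen, hxI, hsum, hhi, hmem⟩ :
      ∃ (I : Set X) (lo hi : ℝ≥0∞), I ⊆ U ∧ IsOpen I ∧ x ∈ I ∧ lo + μ I ≤ hi ∧
        hi ≤ μ univ ∧ ∀ d : X, lo < μ (Iic d) → μ (Iio d) < hi → d ∈ I := by
    by_cases hl : ∃ l, l < x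
    · by_cases hu : ∃ u, x < u
      · obtain ⟨a, b, hxab, hab⟩ := (mem_nhds_iff_exists_Ioo_subset' hl hu).1 hU
        refine ⟨Ioo a b, μ (Iic a), μ (Iio b), hab, isOpen_Ioo, hxab, ?_, measure_mono (subset_univ _), ?_⟩
        · rw [← measure_union (by rw [disjoint_left]; rintro y (hy : y ≤ a) ⟨h1, -⟩; exact absurd h1 (not_lt.2 hy)) measurableSet_Ioo]
          apply measure_mono
          rintro y (hy | hy)
          · exact lt_of_le_of_lt hy (hxab.1.trans hxab.2)
          · exact hy.2
        · intro d h1 h2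
          constructor
          · by_contra hda
            exact absurd (measure_mono (Iic_subset_Iic.2 (not_lt.1 hda))) (not_le.2 h1)
          · by_contra hbd
            exact absurd (measure_mono (Iio_subset_Iio (not_lt.1 hbd))) (not_le.2 h2)
      · -- x is a maximum
        push_neg at hu
        obtain ⟨a, hax, hab⟩ := exists_Ioc_subset_of_mem_nhds hU hl
        have hIeq : Ioc a x = Ioi a := by
          ext y; exact ⟨fun hy => hy.1, fun hy => ⟨hy, hu y⟩⟩
        refine ⟨Ioi a, μ (Iic a), μ univ, hIeq ▸ hab, isOpen_Ioi, hax, ?_, le_rfl, ?_⟩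
        · rw [← measure_union (by rw [disjoint_left]; rintro y (hy : y ≤ a) (h1 : a < y); exact absurd h1 (not_lt.2 hy)) measurableSet_Ioi, Iic_union_Ioi]
        · intro d h1 _
          by_contra hda
          exact absurd (measure_mono (Iic_subset_Iic.2 (not_lt.1 hda))) (not_le.2 h1)
    · push_neg at hl
      by_cases hu : ∃ u, x < u
      · -- x is a minimum
        obtain ⟨b, hxb, hab⟩ := exists_Ico_subset_of_mem_nhds hU hu
        have hIeq : Ico x b = Iio b := by
          ext y; exact ⟨fun hy => hy.2, fun hy => ⟨hl y, hy⟩⟩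
        refine ⟨Iio b, 0, μ (Iio b), hIeq ▸ hab, isOpen_Iio, hxb, by rw [zero_add], measure_mono (subset_univ _), ?_⟩
        intro d _ h2
        by_contra hbd
        exact absurd (measure_mono (Iio_subset_Iio (not_lt.1 hbd))) (not_le.2 h2)
      · -- X = {x}
        push_neg at hu
        refine ⟨univ, 0, μ univ, fun y _ => ?_, isOpen_univ, mem_univ x, by rw [zero_add], le_rfl, fun d _ _ => mem_univ d⟩
        have : y = x := le_antisymm (hu y) (hl y)
        exact this ▸ hxU
  have hIpos : μ I ≠ 0 := hxpos I hIopen hxI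
  have hlohi : lo < hi := by
    calc lo < lo + μ I := ENNReal.lt_add_right (ne_top_of_le_ne_top (measure_ne_top μ univ) ((le_add_right le_rfl).trans (hsum.trans hhi))) hIpos
    _ ≤ hi := hsum
  obtain ⟨p, -, hlp, hpi⟩ := ENNReal.lt_iff_exists_rat_btwn.1 hlohi
  obtain ⟨q, -, hpq, hqi⟩ := ENNReal.lt_iff_exists_rat_btwn.1 hpi
  have hex : ∃ y : X, (Real.toNNReal p : ℝ≥0∞) < μ (Iic y) ∧ μ (Iio y) < (Real.toNNReal q : ℝ≥0∞) := by
    by_contra hcon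
    push_neg at hcon
    have : Nonempty X := ⟨x⟩
    exact key18 μ (lt_of_le_of_lt (zero_le : (0:ℝ≥0∞) ≤ lo) hlp) hpq (hqi.le.trans hhi)
      (fun y => (le_or_gt (μ (Iic y)) _).imp id (hcon y))
  obtain ⟨d, hds, hd1, hd2⟩ := hs2 p q hex
  exact ⟨d, hIU (hmem d (hlp.trans hd1) (hd2.trans hqi)),
    mem_iUnion.2 ⟨p, mem_iUnion.2 ⟨q, hds⟩⟩⟩
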